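/- Let P be the probability measure with density 3/2 on J₁ = [0, 1/3] and 9/4 on J₂ = [2/3, 7/9] and J₃ = [8/9, 1]. For positive integers n₁, n₂, n₃, the set consisting of the n₁ midpoints of equal subintervals of J₁, n₂ of J₂, and n₃ of J₃ has distortion (1/216)·(1/n₁²) + (1/3888)·(1/n₂² + 1/n₃²) with respect to P. -/

import Mathlib

open MeasureTheory Set

/-- The density: `3/2` on `[0,1/3]`, `9/4` on `[2/3,7/9] ∪ [8/9,1]`, `0` elsewhere. -/
noncomputable def g (x : ℝ) : ℝ :=
  Set.indicator (Set.Icc (0 : ℝ) (1 / 3)) (fun _ => (3 : ℝ) / 2) x +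
    Set.indicator (Set.Icc ((2 : ℝ) / 3) (7 / 9) ∪ Set.Icc ((8 : ℝ) / 9) 1)
      (fun _ => (9 : ℝ) / 4) x

/-- The piecewise uniform probability measure with finitely many pieces. -/
noncomputable def Q : Measure ℝ :=
  MeasureTheory.volume.withDensity (fun x => ENNReal.ofReal (g x))

open intervalIntegral
open scoped ENNReal NNReal

lemma pointwise_sInf (S : Set ℝ) (m x : ℝ) (hm : m ∈ S)
    (hle : ∀ a ∈ S, |x - m| ≤ |x - a|) :
    sInf ((fun a => (x - a) ^ 2) '' S) = (x - m) ^ 2 := by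
  apply IsLeast.csInf_eq
  constructor
  · exact ⟨m, hm, rfl⟩
  · rintro y ⟨a, ha, rfl⟩
    calc (x - m) ^ 2 = |x - m| ^ 2 := (sq_abs _).symm
      _ ≤ |x - a| ^ 2 := pow_le_pow_left₀ (abs_nonneg _) (hle a ha) 2
      _ = (x - a) ^ 2 := sq_abs _

lemma piece (c L : ℝ) (hL : 0 < L) (n : ℕ) (hn : 0 < n) (S : Set ℝ)
    (hS : ∀ a ∈ S, (∃ i : ℕ, 1 ≤ i ∧ i ≤ n ∧ a = c + (2 * (i : ℝ) - 1) * L / (2 * n)) ∨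
        a + L / (2 * n) ≤ c ∨ c + L + L / (2 * n) ≤ a)
    (hmem : ∀ i : ℕ, 1 ≤ i → i ≤ n → c + (2 * (i : ℝ) - 1) * L / (2 * n) ∈ S) :
    IntegrableOn (fun x => sInf ((fun a => (x - a) ^ 2) '' S)) (Icc c (c + L)) volume ∧
    ∫ x in c..(c + L), sInf ((fun a => (x - a) ^ 2) '' S) = L ^ 3 / (12 * (n : ℝ) ^ 2) := by
  have hN : (1 : ℝ) ≤ n := Nat.one_le_cast.mpr hn
  have hN0 : (0 : ℝ) < n := by linarith
  set h : ℝ := L / (2 * n) with hh_def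
  have hh : 0 < h := by positivity
  have hLh : L = 2 * n * h := by rw [hh_def]; field_simp
  set f : ℝ → ℝ := fun x => sInf ((fun a => (x - a) ^ 2) '' S) with hf
  set p : ℕ → ℝ := fun k => c + 2 * k * h with hp
  have hpmono : ∀ k : ℕ, p k ≤ p (k + 1) := by
    intro k; simp only [hp]; push_cast; nlinarith
  have hEq : ∀ k : ℕ, k < n → ∀ x ∈ Icc (p k) (p (k + 1)),
      f x = (x - (c + (2 * (k : ℝ) + 1) * h)) ^ 2 := by
    intro k hk x hx
    obtain ⟨hx1, hx2⟩ := hx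
    have hx1' : c + 2 * (k : ℝ) * h ≤ x := hx1
    have hx2' : x ≤ c + (2 * (k : ℝ) + 2) * h := by
      have : x ≤ c + 2 * ((k : ℕ) + 1 : ℕ) * h := hx2
      push_cast at this; linarith
    have habs : |x - (c + (2 * (k : ℝ) + 1) * h)| ≤ h := by
      rw [abs_le]; constructor <;> nlinarith
    apply pointwise_sInf
    · have hmm := hmem (k + 1) (Nat.le_add_left 1 k) hk
      have : c + (2 * ((k + 1 : ℕ) : ℝ) - 1) * L / (2 * n) = c + (2 * (k : ℝ) + 1) * h := by
        push_cast; rw [hh_def]; ring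
      rwa [this] at hmm
    · intro a ha
      rcases hS a ha with ⟨i, hi1, hiN, rfl⟩ | hfar | hfar
      · have hai : c + (2 * (i : ℝ) - 1) * L / (2 * (n : ℝ)) = c + (2 * (i : ℝ) - 1) * h := by
          rw [hh_def]; ring
        rw [hai]
        rcases lt_trichotomy i (k + 1) with hik | hik | hik
        · have hik' : (i : ℝ) ≤ k := by exact_mod_cast Nat.lt_succ_iff.mp hik
          have h1 : c + (2 * (i : ℝ) - 1) * h ≤ x - h := by nlinarith
          calc |x - (c + (2 * (k : ℝ) + 1) * h)| ≤ h := habs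
            _ ≤ x - (c + (2 * (i : ℝ) - 1) * h) := by linarith
            _ ≤ |x - (c + (2 * (i : ℝ) - 1) * h)| := le_abs_self _
        · subst hik
          have : (2 * ((k + 1 : ℕ) : ℝ) - 1) = 2 * (k : ℝ) + 1 := by push_cast; ring
          rw [this]
        · have hik' : (k : ℝ) + 2 ≤ i := by exact_mod_cast hik
          have h1 : x + h ≤ c + (2 * (i : ℝ) - 1) * h := by nlinarith
          calc |x - (c + (2 * (k : ℝ) + 1) * h)| ≤ h := habs
            _ ≤ (c + (2 * (i : ℝ) - 1) * h) - x := by linarith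
            _ ≤ |x - (c + (2 * (i : ℝ) - 1) * h)| := by
                rw [abs_sub_comm]; exact le_abs_self _
      · have h1 : h ≤ x - a := by nlinarith
        calc |x - (c + (2 * (k : ℝ) + 1) * h)| ≤ h := habs
          _ ≤ x - a := h1
          _ ≤ |x - a| := le_abs_self _
      · have hk' : (k : ℝ) + 1 ≤ n := by exact_mod_cast hk
        rw [hLh] at hfar
        have h1 : h ≤ a - x := by nlinarith
        calc |x - (c + (2 * (k : ℝ) + 1) * h)| ≤ h := habs
          _ ≤ a - x := h1
          _ ≤ |x - a| := by rw [abs_sub_comm]; exact le_abs_self _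
  have hcont : ∀ m : ℝ, Continuous (fun x : ℝ => (x - m) ^ 2) := by
    intro m; fun_prop
  have hInt : ∀ k : ℕ, k < n → IntervalIntegrable f volume (p k) (p (k + 1)) := by
    intro k hk
    rw [intervalIntegrable_iff_integrableOn_Icc_of_le (hpmono k)]
    exact ((hcont _).integrableOn_Icc).congr_fun
      (fun x hx => (hEq k hk x hx).symm) measurableSet_Icc
  have hp0 : p 0 = c := by simp only [hp]; norm_num
  have hpn : p n = c + L := by simp only [hp]; rw [hLh]
  have hII : IntervalIntegrable f volume c (c + L) := by
    have := IntervalIntegrable.trans_iterate (a := p) (μ := volume) (f := f) (n := n)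
      fun k hk => hInt k hk
    rwa [hp0, hpn] at this
  constructor
  · rw [← intervalIntegrable_iff_integrableOn_Icc_of_le (by linarith)]
    exact hII
  · have hsum := intervalIntegral.sum_integral_adjacent_intervals (μ := volume) (a := p)
      (f := f) (fun k hk => hInt k hk)
    rw [hp0, hpn] at hsum
    rw [← hsum]
    have hval : ∀ k ∈ Finset.range n, (∫ x in p k..p (k + 1), f x) = 2 * h ^ 3 / 3 := by
      intro k hk
      rw [Finset.mem_range] at hk
      rw [intervalIntegral.integral_congr (g := fun x => (x - (c + (2 * (k : ℝ) + 1) * h)) ^ 2)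
        (by rw [Set.uIcc_of_le (hpmono k)]; intro x hx; exact hEq k hk x hx)]
      rw [intervalIntegral.integral_comp_sub_right (fun x => x ^ 2) (c + (2 * (k : ℝ) + 1) * h),
        integral_pow]
      have e1 : p (k + 1) - (c + (2 * (k : ℝ) + 1) * h) = h := by
        simp only [hp]; push_cast; ring
      have e2 : p k - (c + (2 * (k : ℝ) + 1) * h) = -h := by
        simp only [hp]; ring
      rw [e1, e2]; ring
    rw [Finset.sum_congr rfl hval, Finset.sum_const, Finset.card_range, nsmul_eq_mul]
    rw [hLh]; field_simp; ring


theorem stmt_17 (n₁ n₂ n₃ : ℕ) (h₁ : 0 < n₁) (h₂ : 0 < n₂) (h₃ : 0 < n₃) :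
    (∫ x, sInf ((fun a => (x - a) ^ 2) ''
        ({y : ℝ | ∃ i ∈ Finset.Icc 1 n₁, y = (2 * (i : ℝ) - 1) / (6 * n₁)} ∪
         {y : ℝ | ∃ i ∈ Finset.Icc 1 n₂, y = 2 / 3 + (2 * (i : ℝ) - 1) / (18 * n₂)} ∪
         {y : ℝ | ∃ i ∈ Finset.Icc 1 n₃, y = 8 / 9 + (2 * (i : ℝ) - 1) / (18 * n₃)})) ∂Q) =
      (1 / 216) * (1 / (n₁ : ℝ) ^ 2) + (1 / 3888) * (1 / (n₂ : ℝ) ^ 2 + 1 / (n₃ : ℝ) ^ 2) := by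
  have c₁ : (0 : ℝ) < n₁ := by exact_mod_cast h₁
  have c₂ : (0 : ℝ) < n₂ := by exact_mod_cast h₂
  have c₃ : (0 : ℝ) < n₃ := by exact_mod_cast h₃
  have e₁ : (1 : ℝ) ≤ n₁ := by exact_mod_cast h₁
  have e₂ : (1 : ℝ) ≤ n₂ := by exact_mod_cast h₂
  have e₃ : (1 : ℝ) ≤ n₃ := by exact_mod_cast h₃
  set S : Set ℝ :=
      {y : ℝ | ∃ i ∈ Finset.Icc 1 n₁, y = (2 * (i : ℝ) - 1) / (6 * n₁)} ∪
      {y : ℝ | ∃ i ∈ Finset.Icc 1 n₂, y = 2 / 3 + (2 * (i : ℝ) - 1) / (18 * n₂)} ∪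
      {y : ℝ | ∃ i ∈ Finset.Icc 1 n₃, y = 8 / 9 + (2 * (i : ℝ) - 1) / (18 * n₃)} with hSdef
  set f : ℝ → ℝ := fun x => sInf ((fun a => (x - a) ^ 2) '' S) with hfdef
  -- membership unfolding
  have hmemS : ∀ a : ℝ, a ∈ S ↔
      (∃ i : ℕ, i ∈ Finset.Icc 1 n₁ ∧ a = (2 * (i : ℝ) - 1) / (6 * n₁)) ∨
      (∃ i : ℕ, i ∈ Finset.Icc 1 n₂ ∧ a = 2 / 3 + (2 * (i : ℝ) - 1) / (18 * n₂)) ∨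
      (∃ i : ℕ, i ∈ Finset.Icc 1 n₃ ∧ a = 8 / 9 + (2 * (i : ℝ) - 1) / (18 * n₃)) := by
    intro a
    simp only [hSdef, Set.mem_union, Set.mem_setOf_eq, or_assoc]
  -- bounds helpers
  have bnd₁ : ∀ i : ℕ, i ∈ Finset.Icc 1 n₁ →
      0 ≤ (2 * (i : ℝ) - 1) / (6 * n₁) ∧ (2 * (i : ℝ) - 1) / (6 * n₁) ≤ 1 / 3 := by
    intro i hi
    rw [Finset.mem_Icc] at hi
    have hi1 : (1 : ℝ) ≤ i := by exact_mod_cast hi.1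
    have hi2 : (i : ℝ) ≤ n₁ := by exact_mod_cast hi.2
    constructor
    · apply div_nonneg (by linarith) (by positivity)
    · rw [div_le_iff₀ (by positivity)]; linarith
  have bnd₂ : ∀ i : ℕ, i ∈ Finset.Icc 1 n₂ →
      0 ≤ (2 * (i : ℝ) - 1) / (18 * n₂) ∧ (2 * (i : ℝ) - 1) / (18 * n₂) ≤ 1 / 9 := by
    intro i hi
    rw [Finset.mem_Icc] at hi
    have hi1 : (1 : ℝ) ≤ i := by exact_mod_cast hi.1
    have hi2 : (i : ℝ) ≤ n₂ := by exact_mod_cast hi.2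
    constructor
    · apply div_nonneg (by linarith) (by positivity)
    · rw [div_le_iff₀ (by positivity)]; linarith
  have bnd₃ : ∀ i : ℕ, i ∈ Finset.Icc 1 n₃ →
      0 ≤ (2 * (i : ℝ) - 1) / (18 * n₃) ∧ (2 * (i : ℝ) - 1) / (18 * n₃) ≤ 1 / 9 := by
    intro i hi
    rw [Finset.mem_Icc] at hi
    have hi1 : (1 : ℝ) ≤ i := by exact_mod_cast hi.1
    have hi2 : (i : ℝ) ≤ n₃ := by exact_mod_cast hi.2
    constructor
    · apply div_nonneg (by linarith) (by positivity)
    · rw [div_le_iff₀ (by positivity)]; linarith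
  have half₁ : (1 / 3 : ℝ) / (2 * n₁) ≤ 1 / 6 := by
    rw [div_le_iff₀ (by positivity)]; linarith
  have half₂ : (1 / 9 : ℝ) / (2 * n₂) ≤ 1 / 18 := by
    rw [div_le_iff₀ (by positivity)]; linarith
  have half₃ : (1 / 9 : ℝ) / (2 * n₃) ≤ 1 / 18 := by
    rw [div_le_iff₀ (by positivity)]; linarith
  -- the three pieces
  have key₁ := piece 0 (1 / 3) (by norm_num) n₁ h₁ S ?_ ?_
  rotate_left
  · intro a ha
    rcases (hmemS a).mp ha with ⟨i, hi, rfl⟩ | ⟨i, hi, rfl⟩ | ⟨i, hi, rfl⟩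
    · rw [Finset.mem_Icc] at hi
      refine Or.inl ⟨i, hi.1, hi.2, ?_⟩
      rw [zero_add, div_eq_div_iff (by positivity) (by positivity)]; ring
    · exact Or.inr (Or.inr (by have := (bnd₂ i hi).1; linarith))
    · exact Or.inr (Or.inr (by have := (bnd₃ i hi).1; linarith))
  · intro i hi1 hi2
    rw [hmemS]
    refine Or.inl ⟨i, Finset.mem_Icc.mpr ⟨hi1, hi2⟩, ?_⟩
    rw [zero_add, div_eq_div_iff (by positivity) (by positivity)]; ring
  have key₂ := piece (2 / 3) (1 / 9) (by norm_num) n₂ h₂ S ?_ ?_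
  rotate_left
  · intro a ha
    rcases (hmemS a).mp ha with ⟨i, hi, rfl⟩ | ⟨i, hi, rfl⟩ | ⟨i, hi, rfl⟩
    · exact Or.inr (Or.inl (by have := (bnd₁ i hi).2; linarith))
    · rw [Finset.mem_Icc] at hi
      refine Or.inl ⟨i, hi.1, hi.2, ?_⟩
      have : (2 * (i : ℝ) - 1) / (18 * n₂) = (2 * (i : ℝ) - 1) * (1 / 9) / (2 * n₂) := by
        rw [div_eq_div_iff (by positivity) (by positivity)]; ring
      rw [this]
    · exact Or.inr (Or.inr (by have := (bnd₃ i hi).1; linarith))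
  · intro i hi1 hi2
    rw [hmemS]
    refine Or.inr (Or.inl ⟨i, Finset.mem_Icc.mpr ⟨hi1, hi2⟩, ?_⟩)
    have : (2 * (i : ℝ) - 1) * (1 / 9) / (2 * n₂) = (2 * (i : ℝ) - 1) / (18 * n₂) := by
      rw [div_eq_div_iff (by positivity) (by positivity)]; ring
    rw [this]
  have key₃ := piece (8 / 9) (1 / 9) (by norm_num) n₃ h₃ S ?_ ?_
  rotate_left
  · intro a ha
    rcases (hmemS a).mp ha with ⟨i, hi, rfl⟩ | ⟨i, hi, rfl⟩ | ⟨i, hi, rfl⟩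
    · exact Or.inr (Or.inl (by have := (bnd₁ i hi).2; linarith))
    · exact Or.inr (Or.inl (by have := (bnd₂ i hi).2; linarith))
    · rw [Finset.mem_Icc] at hi
      refine Or.inl ⟨i, hi.1, hi.2, ?_⟩
      have : (2 * (i : ℝ) - 1) / (18 * n₃) = (2 * (i : ℝ) - 1) * (1 / 9) / (2 * n₃) := by
        rw [div_eq_div_iff (by positivity) (by positivity)]; ring
      rw [this]
  · intro i hi1 hi2
    rw [hmemS]
    refine Or.inr (Or.inr ⟨i, Finset.mem_Icc.mpr ⟨hi1, hi2⟩, ?_⟩)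
    have : (2 * (i : ℝ) - 1) * (1 / 9) / (2 * n₃) = (2 * (i : ℝ) - 1) / (18 * n₃) := by
      rw [div_eq_div_iff (by positivity) (by positivity)]; ring
    rw [this]
  obtain ⟨hI₁, hv₁⟩ := key₁
  obtain ⟨hI₂, hv₂⟩ := key₂
  obtain ⟨hI₃, hv₃⟩ := key₃
  norm_num at hI₁ hv₁ hI₂ hv₂ hI₃ hv₃
  -- density manipulation
  have hg_meas : Measurable g := by
    unfold g
    exact (measurable_const.indicator measurableSet_Icc).add
      (measurable_const.indicator (measurableSet_Icc.union measurableSet_Icc))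
  have hg_nonneg : ∀ x, 0 ≤ g x := by
    intro x
    unfold g
    apply add_nonneg <;> apply Set.indicator_nonneg <;> intros <;> norm_num
  have hQ : (∫ x, f x ∂Q) = ∫ x, g x * f x := by
    rw [show Q = volume.withDensity (fun x => ((g x).toNNReal : ℝ≥0∞)) from rfl,
      integral_withDensity_eq_integral_smul hg_meas.real_toNNReal f]
    congr 1
    funext x
    rw [NNReal.smul_def, Real.coe_toNNReal _ (hg_nonneg x), smul_eq_mul]
  simp only [← hfdef] at hI₁ hv₁ hI₂ hv₂ hI₃ hv₃
  have hF₁ : Integrable ((Icc (0 : ℝ) (1 / 3)).indicator fun x => 3 / 2 * f x) volume :=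
    (integrable_indicator_iff measurableSet_Icc).mpr (hI₁.const_mul _)
  have hF₂ : Integrable ((Icc ((2 : ℝ) / 3) (7 / 9)).indicator fun x => 9 / 4 * f x) volume :=
    (integrable_indicator_iff measurableSet_Icc).mpr (hI₂.const_mul _)
  have hF₃ : Integrable ((Icc ((8 : ℝ) / 9) 1).indicator fun x => 9 / 4 * f x) volume :=
    (integrable_indicator_iff measurableSet_Icc).mpr (hI₃.const_mul _)
  have hsplit : ∀ x, g x * f x =
      (Icc (0 : ℝ) (1 / 3)).indicator (fun x => 3 / 2 * f x) x +
      ((Icc ((2 : ℝ) / 3) (7 / 9)).indicator (fun x => 9 / 4 * f x) x +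
       (Icc ((8 : ℝ) / 9) 1).indicator (fun x => 9 / 4 * f x) x) := by
    intro x
    by_cases hA : x ∈ Icc (0 : ℝ) (1 / 3)
    · have hB : x ∉ Icc ((2 : ℝ) / 3) (7 / 9) := by
        simp only [mem_Icc] at hA ⊢; intro hB; linarith [hA.2, hB.1]
      have hC : x ∉ Icc ((8 : ℝ) / 9) 1 := by
        simp only [mem_Icc] at hA ⊢; intro hC; linarith [hA.2, hC.1]
      simp only [g, Set.indicator_apply, Set.mem_union, hA, hB, hC, if_true, if_false,
        or_self, if_pos, if_neg, not_false_iff]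
      ring
    · by_cases hB : x ∈ Icc ((2 : ℝ) / 3) (7 / 9)
      · have hC : x ∉ Icc ((8 : ℝ) / 9) 1 := by
          simp only [mem_Icc] at hB ⊢; intro hC; linarith [hB.2, hC.1]
        simp only [g, Set.indicator_apply, Set.mem_union, hA, hB, hC]
        simp only [if_true, if_false, or_false, true_or, if_pos, if_neg, not_false_iff]
        simp [hA, hC]
      · by_cases hC : x ∈ Icc ((8 : ℝ) / 9) 1
        · simp only [g, Set.indicator_apply, Set.mem_union, hA, hB, hC]
          simp [hA, hB]
        · simp only [g, Set.indicator_apply, Set.mem_union, hA, hB, hC]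
          simp [hA, hB, hC]
  rw [hQ]
  calc ∫ x, g x * f x = ∫ x,
        ((Icc (0 : ℝ) (1 / 3)).indicator (fun x => 3 / 2 * f x) x +
        ((Icc ((2 : ℝ) / 3) (7 / 9)).indicator (fun x => 9 / 4 * f x) x +
         (Icc ((8 : ℝ) / 9) 1).indicator (fun x => 9 / 4 * f x) x)) := by
          simp only [hsplit]
    _ = (∫ x, (Icc (0 : ℝ) (1 / 3)).indicator (fun x => 3 / 2 * f x) x) +
          ∫ x, ((Icc ((2 : ℝ) / 3) (7 / 9)).indicator (fun x => 9 / 4 * f x) x +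
           (Icc ((8 : ℝ) / 9) 1).indicator (fun x => 9 / 4 * f x) x) :=
          integral_add hF₁ (hF₂.add hF₃)
    _ = (∫ x, (Icc (0 : ℝ) (1 / 3)).indicator (fun x => 3 / 2 * f x) x) +
          ((∫ x, (Icc ((2 : ℝ) / 3) (7 / 9)).indicator (fun x => 9 / 4 * f x) x) +
           (∫ x, (Icc ((8 : ℝ) / 9) 1).indicator (fun x => 9 / 4 * f x) x)) := by
          rw [integral_add hF₂ hF₃]
    _ = (1 / 216) * (1 / (n₁ : ℝ) ^ 2) + (1 / 3888) * (1 / (n₂ : ℝ) ^ 2 + 1 / (n₃ : ℝ) ^ 2) := by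
        rw [MeasureTheory.integral_indicator measurableSet_Icc, MeasureTheory.integral_indicator measurableSet_Icc,
          MeasureTheory.integral_indicator measurableSet_Icc,
          integral_Icc_eq_integral_Ioc, integral_Icc_eq_integral_Ioc,
          integral_Icc_eq_integral_Ioc,
          ← intervalIntegral.integral_of_le (by norm_num : (0 : ℝ) ≤ 1 / 3),
          ← intervalIntegral.integral_of_le (by norm_num : (2 : ℝ) / 3 ≤ 7 / 9),
          ← intervalIntegral.integral_of_le (by norm_num : (8 : ℝ) / 9 ≤ 1),
          intervalIntegral.integral_const_mul, intervalIntegral.integral_const_mul,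
          intervalIntegral.integral_const_mul, hv₁, hv₂, hv₃]
        field_simp
        ring
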